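/- The function h ↦ Φ(h) is strictly increasing on [0, ∞); in particular Φ(0) < Φ(h) for all h > 0. -/

import Mathlib

open Real MeasureTheory Set

noncomputable def Phi (h : ℝ) : ℝ :=
  ∫ y in Set.Ioi (0:ℝ),
    Real.sqrt y * (Real.sqrt ((y + 2*h) * (y + 2 + 2*h)) - (y + 1 + 2*h) + 1/(2*y))

noncomputable def G (h y : ℝ) : ℝ :=
  Real.sqrt y * (1/(2*y) - 1/(Real.sqrt ((y + 2*h) * (y + 2 + 2*h)) + (y + 1 + 2*h)))

lemma key (h y : ℝ) (hh : 0 ≤ h) (hy : 0 < y) :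
    Real.sqrt y * (Real.sqrt ((y + 2*h) * (y + 2 + 2*h)) - (y + 1 + 2*h) + 1/(2*y)) = G h y := by
  have hprod : 0 ≤ (y + 2*h) * (y + 2 + 2*h) := by nlinarith
  have hS := Real.sq_sqrt hprod
  have hSnn := Real.sqrt_nonneg ((y + 2*h) * (y + 2 + 2*h))
  set s := Real.sqrt ((y + 2*h) * (y + 2 + 2*h)) with hs
  have hden : 0 < s + (y + 1 + 2*h) := by linarith
  unfold G
  rw [← hs]
  congr 1
  field_simp
  linear_combination (2*y) * hS

lemma S_ge (h y : ℝ) (hh : 0 ≤ h) (hy : 0 < y) :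
    y ≤ Real.sqrt ((y + 2*h) * (y + 2 + 2*h)) := by
  rw [Real.le_sqrt hy.le (by nlinarith)]
  nlinarith

lemma G_pos (h y : ℝ) (hh : 0 ≤ h) (hy : 0 < y) : 0 < G h y := by
  have hs := S_ge h y hh hy
  have h1 : 1/(Real.sqrt ((y + 2*h) * (y + 2 + 2*h)) + (y + 1 + 2*h)) < 1/(2*y) :=
    one_div_lt_one_div_of_lt (by positivity) (by linarith)
  exact mul_pos (Real.sqrt_pos.mpr hy) (by linarith)

lemma G_mono (h₁ h₂ y : ℝ) (hh : 0 ≤ h₁) (h12 : h₁ < h₂) (hy : 0 < y) :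
    G h₁ y < G h₂ y := by
  have hs1 := S_ge h₁ y hh hy
  have hs12 : Real.sqrt ((y + 2*h₁) * (y + 2 + 2*h₁)) ≤
      Real.sqrt ((y + 2*h₂) * (y + 2 + 2*h₂)) :=
    Real.sqrt_le_sqrt (by nlinarith)
  have hd1 : 0 < Real.sqrt ((y + 2*h₁) * (y + 2 + 2*h₁)) + (y + 1 + 2*h₁) := by linarith
  have h1 : 1/(Real.sqrt ((y + 2*h₂) * (y + 2 + 2*h₂)) + (y + 1 + 2*h₂)) <
      1/(Real.sqrt ((y + 2*h₁) * (y + 2 + 2*h₁)) + (y + 1 + 2*h₁)) :=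
    one_div_lt_one_div_of_lt hd1 (by linarith)
  exact mul_lt_mul_of_pos_left (by linarith) (Real.sqrt_pos.mpr hy)

lemma G_bound_small (h y : ℝ) (hh : 0 ≤ h) (hy : 0 < y) :
    G h y ≤ y ^ (-(1/2) : ℝ) := by
  have hs := S_ge h y hh hy
  have hsp : 0 < Real.sqrt y := Real.sqrt_pos.mpr hy
  have hsq : Real.sqrt y * Real.sqrt y = y := Real.mul_self_sqrt hy.le
  have hd : 0 < Real.sqrt ((y + 2*h) * (y + 2 + 2*h)) + (y + 1 + 2*h) := by linarith
  have h1 : G h y ≤ Real.sqrt y * (1/(2*y)) := by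
    unfold G
    apply mul_le_mul_of_nonneg_left _ (Real.sqrt_nonneg y)
    have := one_div_pos.mpr hd
    linarith
  have h2 : Real.sqrt y * (1/(2*y)) = (2 * Real.sqrt y)⁻¹ := by
    field_simp
    linear_combination hsq
  have h3 : y ^ (-(1/2) : ℝ) = (Real.sqrt y)⁻¹ := by
    rw [Real.rpow_neg hy.le, ← Real.sqrt_eq_rpow]
  rw [h3]
  rw [h2] at h1
  refine h1.trans ?_
  gcongr
  linarith

lemma G_bound_big (h y : ℝ) (hh : 0 ≤ h) (hy : 1 ≤ y) :
    G h y ≤ (2 + 6*h + 2*h^2) * y ^ (-(3/2) : ℝ) := by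
  have hy0 : 0 < y := lt_of_lt_of_le one_pos hy
  have hprod : 0 ≤ (y + 2*h) * (y + 2 + 2*h) := by nlinarith
  have hsy := S_ge h y hh hy0
  have hsc : Real.sqrt ((y + 2*h) * (y + 2 + 2*h)) ≤ y + (1 + 4*h + 2*h^2) := by
    have h1 : Real.sqrt ((y + 2*h) * (y + 2 + 2*h)) ≤
        Real.sqrt ((y + (1 + 4*h + 2*h^2))^2) := Real.sqrt_le_sqrt (by nlinarith)
    rwa [Real.sqrt_sq (by positivity)] at h1
  set s := Real.sqrt ((y + 2*h) * (y + 2 + 2*h)) with hsdef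
  set d := s + (y + 1 + 2*h) with hddef
  have hd2 : 2*y ≤ d := by simp only [hddef]; linarith
  have hdpos : 0 < d := by linarith
  have hsub : 1/(2*y) - 1/d = (d - 2*y)/(2*y*d) := by
    field_simp
  have h5 : 1/(2*y) - 1/d ≤ (2 + 6*h + 2*h^2) / y^2 := by
    rw [hsub, div_le_div_iff₀ (by positivity) (by positivity)]
    have hKd : d - 2*y ≤ 2 + 6*h + 2*h^2 := by simp only [hddef]; linarith
    have hy2 : y^2 ≤ 2*y*d := by nlinarith
    nlinarith [mul_le_mul hKd hy2 (sq_nonneg y)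
      (by positivity : (0:ℝ) ≤ 2 + 6*h + 2*h^2)]
  have hrpow : y ^ (-(3/2) : ℝ) = Real.sqrt y / y^2 := by
    rw [Real.sqrt_eq_rpow, ← Real.rpow_natCast y 2, ← Real.rpow_sub hy0]
    norm_num
  rw [hrpow]
  have hGeq : G h y = Real.sqrt y * (1/(2*y) - 1/d) := rfl
  rw [hGeq]
  calc Real.sqrt y * (1/(2*y) - 1/d)
      ≤ Real.sqrt y * ((2 + 6*h + 2*h^2) / y^2) :=
        mul_le_mul_of_nonneg_left h5 (Real.sqrt_nonneg y)
    _ = (2 + 6*h + 2*h^2) * (Real.sqrt y / y^2) := by ring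

lemma G_cont (h : ℝ) (hh : 0 ≤ h) : ContinuousOn (G h) (Ioi 0) := by
  unfold G
  apply ContinuousOn.mul (Real.continuous_sqrt.continuousOn)
  apply ContinuousOn.sub
  · exact continuousOn_const.div (by fun_prop) (fun y hy => by
      have : (0:ℝ) < y := hy
      positivity)
  · refine continuousOn_const.div (by fun_prop) (fun y hy => ?_)
    have hy : (0:ℝ) < y := hy
    have := S_ge h y hh hy
    positivity

lemma intG (h : ℝ) (hh : 0 ≤ h) : IntegrableOn (G h) (Ioi 0) := by
  have hcont := G_cont h hh
  rw [← Set.Ioc_union_Ioi_eq_Ioi (zero_le_one : (0:ℝ) ≤ 1)]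
  apply IntegrableOn.union
  · have hint : IntegrableOn (fun y : ℝ => y ^ (-(1/2) : ℝ)) (Ioc 0 1) := by
      have := intervalIntegral.intervalIntegrable_rpow' (a := 0) (b := 1)
        (r := -(1/2)) (by norm_num)
      rwa [intervalIntegrable_iff, uIoc_of_le zero_le_one] at this
    apply Integrable.mono hint
      ((hcont.mono Ioc_subset_Ioi_self).aestronglyMeasurable measurableSet_Ioc)
    filter_upwards [ae_restrict_mem measurableSet_Ioc] with y hy
    have hy0 : 0 < y := hy.1
    rw [Real.norm_eq_abs, Real.norm_eq_abs, abs_of_nonneg (G_pos h y hh hy0).le,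
      abs_of_nonneg (Real.rpow_nonneg hy0.le _)]
    exact G_bound_small h y hh hy0
  · have hint : IntegrableOn (fun y : ℝ => (2 + 6*h + 2*h^2) * y ^ (-(3/2) : ℝ)) (Ioi 1) :=
      (integrableOn_Ioi_rpow_of_lt (by norm_num) one_pos).const_mul _
    apply Integrable.mono hint
      ((hcont.mono (Ioi_subset_Ioi zero_le_one)).aestronglyMeasurable measurableSet_Ioi)
    filter_upwards [ae_restrict_mem measurableSet_Ioi] with y hy
    have hy1 : 1 ≤ y := le_of_lt hy
    have hy0 : 0 < y := lt_of_lt_of_le one_pos hy1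
    rw [Real.norm_eq_abs, Real.norm_eq_abs, abs_of_nonneg (G_pos h y hh hy0).le,
      abs_of_nonneg (by positivity)]
    exact G_bound_big h y hh hy1

theorem Phi_strictMono :
    StrictMonoOn Phi (Set.Ici 0) ∧ ∀ h : ℝ, 0 < h → Phi 0 < Phi h := by
  have mono : StrictMonoOn Phi (Set.Ici 0) := by
    intro a ha b hb hab
    have ha' : (0:ℝ) ≤ a := ha
    have hb' : (0:ℝ) ≤ b := hb
    have hPa : Phi a = ∫ y in Ioi (0:ℝ), G a y :=
      setIntegral_congr_fun measurableSet_Ioi (fun y hy => key a y ha' hy)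
    have hPb : Phi b = ∫ y in Ioi (0:ℝ), G b y :=
      setIntegral_congr_fun measurableSet_Ioi (fun y hy => key b y hb' hy)
    have hia := intG a ha'
    have hib := intG b hb'
    have hdiff : 0 < ∫ y in Ioi (0:ℝ), (G b y - G a y) := by
      refine (setIntegral_pos_iff_support_of_nonneg_ae ?_ ?_).mpr ?_
      · filter_upwards [ae_restrict_mem measurableSet_Ioi] with y hy
        exact (sub_pos.mpr (G_mono a b y ha' hab hy)).le
      · exact hib.sub hia
      · have hsub : Ioi (0:ℝ) ⊆ Function.support (fun y => G b y - G a y) :=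
          fun y hy => (sub_pos.mpr (G_mono a b y ha' hab hy)).ne'
        refine lt_of_lt_of_le ?_
          (measure_mono (subset_inter hsub (subset_refl _)))
        simp [Real.volume_Ioi]
    rw [integral_sub hib hia] at hdiff
    rw [hPa, hPb]
    linarith
  exact ⟨mono, fun h hpos => mono (mem_Ici.mpr le_rfl) (mem_Ici.mpr hpos.le) hpos⟩
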